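/- In the 3-dimensional model, any two distinct points lie on a unique line of the model: if both points are on the same vertical line a_k this line is unique; otherwise the two points lie on distinct vertical lines a_j ≠ a_k, and there is a unique plane through the origin containing both points, which cuts out the unique five-point line through them (incidence axioms I1 and I2). -/

import Mathlib

open Real

noncomputable section

/-- The vertices of the regular pentagon in the horizontal plane of `ℝ³`. -/
def pentagonPt (k : Fin 5) : Fin 3 → ℝ :=
  ![Real.cos (2 * π * (k.val : ℝ) / 5), Real.sin (2 * π * (k.val : ℝ) / 5), 0]

/-- The vertical unit direction. -/
def e3 : Fin 3 → ℝ := ![0, 0, 1]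

/-- The vertical line of the model over the `k`-th pentagon vertex. -/
def vertLine (k : Fin 5) : Set (Fin 3 → ℝ) := {x | ∃ t : ℝ, x = pentagonPt k + t • e3}

/-- The points of the model: the union of the five vertical lines. -/
def ModelPoints : Set (Fin 3 → ℝ) := ⋃ k, vertLine k

/-- Euclidean dot product in `ℝ³`. -/
def dot (n x : Fin 3 → ℝ) : ℝ := n 0 * x 0 + n 1 * x 1 + n 2 * x 2

/-- A five-point line of the model: the trace on the model points of a plane through the
origin with non-horizontal normal (such a plane contains no vertical line). -/
def IsFivePointLine (l : Set (Fin 3 → ℝ)) : Prop :=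
  ∃ n : Fin 3 → ℝ, n 2 ≠ 0 ∧ l = {x ∈ ModelPoints | dot n x = 0}

/-- A line of the model: a vertical line or a five-point line. -/
def IsModelLine (l : Set (Fin 3 → ℝ)) : Prop :=
  (∃ k, l = vertLine k) ∨ IsFivePointLine l

lemma sin_pent_ne {j k : Fin 5} (h : j ≠ k) :
    Real.sin (2 * π * (k.val : ℝ) / 5 - 2 * π * (j.val : ℝ) / 5) ≠ 0 := by
  intro hsin
  rw [Real.sin_eq_zero_iff] at hsin
  obtain ⟨n, hn⟩ := hsin
  have h2 : (5 * n : ℝ) * π = (2 * (k.val : ℝ) - 2 * (j.val : ℝ)) * π := by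
    nlinarith [hn]
  have h3 : (5 * n : ℝ) = 2 * (k.val : ℝ) - 2 * (j.val : ℝ) :=
    mul_right_cancel₀ Real.pi_ne_zero h2
  have h4 : (5 * n : ℤ) = 2 * (k.val : ℤ) - 2 * (j.val : ℤ) := by exact_mod_cast h3
  have hj := j.isLt; have hk := k.isLt
  have : j.val = k.val := by omega
  exact h (Fin.ext this)

lemma mem_vert_coords {X : Fin 3 → ℝ} {j : Fin 5} {s : ℝ} (h : X = pentagonPt j + s • e3) :
    X 0 = Real.cos (2 * π * (j.val : ℝ) / 5) ∧
    X 1 = Real.sin (2 * π * (j.val : ℝ) / 5) ∧ X 2 = s := by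
  subst h
  refine ⟨?_, ?_, ?_⟩ <;> simp [pentagonPt, e3]

lemma vert_inj {X : Fin 3 → ℝ} {j k : Fin 5} (hj : X ∈ vertLine j) (hk : X ∈ vertLine k) :
    j = k := by
  obtain ⟨s, hs⟩ := hj
  obtain ⟨t, ht⟩ := hk
  obtain ⟨h0, h1, _⟩ := mem_vert_coords hs
  obtain ⟨h0', h1', _⟩ := mem_vert_coords ht
  by_contra hne
  apply sin_pent_ne hne
  rw [Real.sin_sub, ← h0', ← h1', h0, h1]
  ring

/-- Incidence axioms I1 and I2 in the model: any two distinct points of the model lie on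
exactly one line of the model. -/
theorem model_I1_I2 :
    ∀ X Y : Fin 3 → ℝ, X ∈ ModelPoints → Y ∈ ModelPoints → X ≠ Y →
      ∃! l : Set (Fin 3 → ℝ), IsModelLine l ∧ X ∈ l ∧ Y ∈ l := by
  intro X Y hX hY hXY
  obtain ⟨j, s, hs⟩ := Set.mem_iUnion.mp hX
  obtain ⟨k, t, ht⟩ := Set.mem_iUnion.mp hY
  obtain ⟨hX0, hX1, hX2⟩ := mem_vert_coords hs
  obtain ⟨hY0, hY1, hY2⟩ := mem_vert_coords ht
  rcases eq_or_ne j k with rfl | hjk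
  · -- same vertical line
    refine ⟨vertLine j, ⟨Or.inl ⟨j, rfl⟩, ⟨s, hs⟩, ⟨t, ht⟩⟩, ?_⟩
    rintro l ⟨hl | ⟨m, hm2, rfl⟩, hXl, hYl⟩
    · obtain ⟨k', rfl⟩ := hl
      exact congrArg vertLine (vert_inj hXl ⟨s, hs⟩)
    · exfalso
      have hst : s ≠ t := fun h => hXY (by rw [hs, ht, h])
      have h1 : dot m X = 0 := hXl.2
      have h2 : dot m Y = 0 := hYl.2
      have hE0 : X 0 = Y 0 := by rw [hX0, hY0]
      have hE1 : X 1 = Y 1 := by rw [hX1, hY1]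
      unfold dot at h1 h2
      have key : m 2 * (s - t) = 0 := by
        rw [← hX2, ← hY2]
        linear_combination h1 - h2 - m 0 * hE0 - m 1 * hE1
      exact hm2 ((mul_eq_zero.mp key).resolve_right (sub_ne_zero.mpr hst))
  · -- distinct vertical lines
    obtain ⟨n, hn2, hnX, hnY, hk0, hk1, hk2⟩ :
        ∃ n : Fin 3 → ℝ, n 2 ≠ 0 ∧ dot n X = 0 ∧ dot n Y = 0 ∧
          n 0 = X 1 * Y 2 - X 2 * Y 1 ∧ n 1 = X 2 * Y 0 - X 0 * Y 2 ∧
          n 2 = X 0 * Y 1 - X 1 * Y 0 := by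
      refine ⟨![X 1 * Y 2 - X 2 * Y 1, X 2 * Y 0 - X 0 * Y 2, X 0 * Y 1 - X 1 * Y 0],
        ?_, ?_, ?_, by simp, by simp, by simp⟩
      · have hval : X 0 * Y 1 - X 1 * Y 0 =
            Real.sin (2 * π * (k.val : ℝ) / 5 - 2 * π * (j.val : ℝ) / 5) := by
          rw [hX0, hX1, hY0, hY1, Real.sin_sub]; ring
        simpa [hval] using sin_pent_ne hjk
      · show _ * _ + _ * _ + _ * _ = 0
        simp only [Matrix.cons_val_zero, Matrix.cons_val_one, Matrix.cons_val_two, Matrix.tail_cons, Matrix.head_cons]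
        norm_num; ring
      · show _ * _ + _ * _ + _ * _ = 0
        simp only [Matrix.cons_val_zero, Matrix.cons_val_one, Matrix.cons_val_two, Matrix.tail_cons, Matrix.head_cons]
        norm_num; ring
    refine ⟨{x ∈ ModelPoints | dot n x = 0}, ⟨Or.inr ⟨n, hn2, rfl⟩, ⟨hX, hnX⟩, ⟨hY, hnY⟩⟩, ?_⟩
    rintro l ⟨hl | ⟨m, hm2, rfl⟩, hXl, hYl⟩
    · obtain ⟨k', rfl⟩ := hl
      exact absurd ((vert_inj hXl ⟨s, hs⟩).symm.trans (vert_inj hYl ⟨t, ht⟩)) hjk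
    · have hmX : dot m X = 0 := hXl.2
      have hmY : dot m Y = 0 := hYl.2
      unfold dot at hmX hmY
      have e0 : m 0 * n 2 = m 2 * n 0 := by
        rw [hk0, hk2]
        linear_combination Y 1 * hmX - X 1 * hmY
      have e1 : m 1 * n 2 = m 2 * n 1 := by
        rw [hk1, hk2]
        linear_combination X 0 * hmY - Y 0 * hmX
      have hiff : ∀ x : Fin 3 → ℝ, dot m x = 0 ↔ dot n x = 0 := by
        intro x
        have hq : dot m x * n 2 = m 2 * dot n x := by
          unfold dot; linear_combination x 0 * e0 + x 1 * e1
        constructor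
        · intro h; rw [h, zero_mul] at hq
          exact (mul_eq_zero.mp hq.symm).resolve_left hm2
        · intro h; rw [h, mul_zero] at hq
          exact (mul_eq_zero.mp hq).resolve_right hn2
      exact Set.ext fun x => and_congr_right fun _ => hiff x

end
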